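/- Let C ≥ 1 be an integer, λ ≥ 0 and ε ≥ 0 real numbers, y : Fin C, and q a positive probability vector on Fin C. If KL((e_y)_λ ‖ q) ≤ ε, then MSP(q) ≥ 1/(1 + λ) + λ/((1 + λ) * C) − Real.sqrt (ε/2). -/

import Mathlib

/-- `p` is a positive probability vector on `Fin C`. -/
def IsPosProbVec {C : ℕ} (p : Fin C → ℝ) : Prop :=
  (∀ i, 0 < p i) ∧ ∑ i, p i = 1

/-- The smoothed vector `p_λ`, `p_λ i = (p i + λ/C)/(1 + λ)`. -/
noncomputable def smooth {C : ℕ} (lam : ℝ) (p : Fin C → ℝ) : Fin C → ℝ :=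
  fun i => (p i + lam / (C : ℝ)) / (1 + lam)

/-- Maximum softmax probability: the maximum of `p` over `Fin C`. -/
noncomputable def MSP {C : ℕ} (p : Fin C → ℝ) : ℝ := ⨆ i, p i

/-- KL divergence `KL(a ‖ b) = ∑ i, a i * log (a i / b i)`; terms with
`a i = 0` contribute `0` (which holds since `0 * log (0 / b i) = 0`). -/
noncomputable def KLdiv {C : ℕ} (a b : Fin C → ℝ) : ℝ :=
  ∑ i, a i * Real.log (a i / b i)

/-- The one-hot probability vector at `y`. -/
def oneHot {C : ℕ} (y : Fin C) : Fin C → ℝ := fun i => if i = y then 1 else 0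

-- aux1: for 0 < b ≤ 1, 2(1-b)^2 ≤ -log b
lemma aux1 (b : ℝ) (hb0 : 0 < b) (hb1 : b ≤ 1) : 2*(1-b)^2 ≤ -Real.log b := by
  set h : ℝ → ℝ := fun x => -Real.log x - 2*(1-x)^2 with hh
  have hd : ∀ x ∈ Set.Ioo b 1, HasDerivAt h (-(1/x) + 4*(1-x)) x := by
    intro x hx
    have hx0 : x ≠ 0 := ne_of_gt (hb0.trans hx.1)
    have h1 : HasDerivAt (fun x : ℝ => -Real.log x) (-(1/x)) x := by
      rw [one_div]; exact (Real.hasDerivAt_log hx0).neg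
    have h2 : HasDerivAt (fun x : ℝ => 2*(1-x)^2) (-(4*(1-x))) x := by
      have : HasDerivAt (fun x : ℝ => (1-x)) (-1) x := by
        simpa using (hasDerivAt_id x).const_sub 1
      have := (this.pow 2).const_mul (2:ℝ)
      exact this.congr_deriv (by ring)
    exact (h1.sub h2).congr_deriv (by ring)
  have hanti : AntitoneOn h (Set.Icc b 1) := by
    apply antitoneOn_of_deriv_nonpos (convex_Icc b 1)
    · apply ContinuousOn.sub
      · exact (Real.continuousOn_log.mono (by
          intro x hx
          exact ne_of_gt (lt_of_lt_of_le hb0 hx.1))).neg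
      · fun_prop
    · intro x hx
      rw [interior_Icc] at hx
      exact ((hd x hx).differentiableAt).differentiableWithinAt
    · intro x hx
      rw [interior_Icc] at hx
      rw [(hd x hx).deriv]
      have hx0 : 0 < x := hb0.trans hx.1
      have : -(1/x) + 4*(1-x) = -((2*x-1)^2/x) := by field_simp; ring
      rw [this]
      exact neg_nonpos.mpr (div_nonneg (sq_nonneg _) hx0.le)
  have := hanti (Set.mem_Icc.mpr ⟨le_refl b, hb1⟩) (Set.mem_Icc.mpr ⟨hb1, le_refl 1⟩) hb1
  simp only [hh] at this
  simp at this
  nlinarith [this]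


lemma aux2 (a b : ℝ) (ha0 : 0 < a) (ha1 : a < 1) (hb0 : 0 < b) (hb1 : b < 1) :
    2*(a-b)^2 ≤ a * Real.log (a/b) + (1-a) * Real.log ((1-a)/(1-b)) := by
  set g : ℝ → ℝ := fun x =>
    a*(Real.log a - Real.log x) + (1-a)*(Real.log (1-a) - Real.log (1-x)) - 2*(a-x)^2
    with hg
  have hd : ∀ x ∈ Set.Ioo (0:ℝ) 1, HasDerivAt g (-(a/x) + (1-a)/(1-x) + 4*(a-x)) x := by
    intro x hx
    have hx0 : x ≠ 0 := ne_of_gt hx.1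
    have hx1 : (1:ℝ) - x ≠ 0 := ne_of_gt (by linarith [hx.2])
    have h1 : HasDerivAt (fun x : ℝ => a*(Real.log a - Real.log x)) (-(a/x)) x := by
      have := ((Real.hasDerivAt_log hx0).const_sub (Real.log a)).const_mul a
      exact this.congr_deriv (by field_simp)
    have h2 : HasDerivAt (fun x : ℝ => (1-a)*(Real.log (1-a) - Real.log (1-x)))
        ((1-a)/(1-x)) x := by
      have hin : HasDerivAt (fun x : ℝ => (1:ℝ) - x) (-1) x := by
        simpa using (hasDerivAt_id x).const_sub 1
      have hlog : HasDerivAt (fun x : ℝ => Real.log (1-x)) (-(1/(1-x))) x := by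
        have := (Real.hasDerivAt_log hx1).comp x hin
        exact this.congr_deriv (by field_simp)
      have := (hlog.const_sub (Real.log (1-a))).const_mul (1-a)
      exact this.congr_deriv (by field_simp)
    have h3 : HasDerivAt (fun x : ℝ => 2*(a-x)^2) (-(4*(a-x))) x := by
      have hin : HasDerivAt (fun x : ℝ => a - x) (-1) x := by
        simpa using (hasDerivAt_id x).const_sub a
      have := (hin.pow 2).const_mul (2:ℝ)
      exact this.congr_deriv (by ring)
    have := (h1.add h2).sub h3
    exact this.congr_deriv (by ring)
  have hderiv_sign : ∀ x ∈ Set.Ioo (0:ℝ) 1,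
      -(a/x) + (1-a)/(1-x) + 4*(a-x) = (a-x) * (4 - 1/(x*(1-x))) := by
    intro x hx
    have hx0 : x ≠ 0 := ne_of_gt hx.1
    have hx1 : (1:ℝ) - x ≠ 0 := ne_of_gt (by linarith [hx.2])
    field_simp
    ring
  have hfac : ∀ x ∈ Set.Ioo (0:ℝ) 1, 4 - 1/(x*(1-x)) ≤ 0 := by
    intro x hx
    have hx0 : 0 < x := hx.1
    have hx1 : 0 < 1 - x := by linarith [hx.2]
    have hprod : 0 < x*(1-x) := mul_pos hx0 hx1
    rw [sub_nonpos, le_div_iff₀ hprod]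
    nlinarith [sq_nonneg (2*x-1)]
  have hcont : ContinuousOn g (Set.Ioo (0:ℝ) 1) := by
    intro x hx
    exact ((hd x hx).differentiableAt).continuousAt.continuousWithinAt
  have hga : g a = 0 := by simp [hg]
  have key : 0 ≤ g b := by
    rcases le_or_gt b a with hba | hab
    · -- antitone on [b, a]
      have hsub : Set.Icc b a ⊆ Set.Ioo (0:ℝ) 1 := fun x hx =>
        ⟨lt_of_lt_of_le hb0 hx.1, lt_of_le_of_lt hx.2 ha1⟩
      have hanti : AntitoneOn g (Set.Icc b a) := by
        apply antitoneOn_of_deriv_nonpos (convex_Icc b a) (hcont.mono hsub)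
        · intro x hx
          rw [interior_Icc] at hx
          exact ((hd x (hsub (Set.mem_Icc_of_Ioo hx))).differentiableAt).differentiableWithinAt
        · intro x hx
          rw [interior_Icc] at hx
          have hx' := hsub (Set.mem_Icc_of_Ioo hx)
          rw [(hd x hx').deriv, hderiv_sign x hx']
          have : 0 ≤ a - x := by linarith [hx.2]
          exact mul_nonpos_of_nonneg_of_nonpos this (hfac x hx')
      have := hanti (Set.mem_Icc.mpr ⟨le_refl b, hba⟩) (Set.mem_Icc.mpr ⟨hba, le_refl a⟩) hba
      rw [hga] at this; exact this
    · -- monotone on [a, b]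
      have hsub : Set.Icc a b ⊆ Set.Ioo (0:ℝ) 1 := fun x hx =>
        ⟨lt_of_lt_of_le ha0 hx.1, lt_of_le_of_lt hx.2 hb1⟩
      have hmono : MonotoneOn g (Set.Icc a b) := by
        apply monotoneOn_of_deriv_nonneg (convex_Icc a b) (hcont.mono hsub)
        · intro x hx
          rw [interior_Icc] at hx
          exact ((hd x (hsub (Set.mem_Icc_of_Ioo hx))).differentiableAt).differentiableWithinAt
        · intro x hx
          rw [interior_Icc] at hx
          have hx' := hsub (Set.mem_Icc_of_Ioo hx)
          rw [(hd x hx').deriv, hderiv_sign x hx']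
          have h1 : a - x ≤ 0 := by linarith [hx.1]
          nlinarith [hfac x hx']
      have := hmono (Set.mem_Icc.mpr ⟨le_refl a, hab.le⟩) (Set.mem_Icc.mpr ⟨hab.le, le_refl b⟩) hab.le
      rw [hga] at this; exact this
  have hlog1 : Real.log (a/b) = Real.log a - Real.log b :=
    Real.log_div (ne_of_gt ha0) (ne_of_gt hb0)
  have hlog2 : Real.log ((1-a)/(1-b)) = Real.log (1-a) - Real.log (1-b) :=
    Real.log_div (by linarith : (1:ℝ)-a ≠ 0) (by linarith : (1:ℝ)-b ≠ 0)
  rw [hlog1, hlog2]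
  simp only [hg] at key
  linarith [key]

-- Jensen step: for positive q i on s with sum t, constant c ≥ 0 with card s * c = s',
-- s' * log (s'/t) ≤ ∑ i ∈ s, c * log (c / q i)
lemma jensen_step {ι : Type*} (s : Finset ι) (hs : s.Nonempty) (q : ι → ℝ)
    (hq : ∀ i ∈ s, 0 < q i) (c : ℝ) (hc : 0 < c) :
    (s.card * c) * Real.log ((s.card * c) / (∑ i ∈ s, q i)) ≤
      ∑ i ∈ s, c * Real.log (c / q i) := by
  set t := ∑ i ∈ s, q i with ht
  have ht0 : 0 < t := Finset.sum_pos hq hs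
  have hn0 : 0 < (s.card : ℝ) := by exact_mod_cast Finset.card_pos.mpr hs
  set m := t / s.card with hm
  have hm0 : 0 < m := div_pos ht0 hn0
  have key : ∑ i ∈ s, Real.log (q i) ≤ s.card * Real.log m := by
    have h1 : ∀ i ∈ s, Real.log (q i) ≤ Real.log m + (q i / m - 1) := by
      intro i hi
      have := Real.log_le_sub_one_of_pos (div_pos (hq i hi) hm0)
      rw [Real.log_div (ne_of_gt (hq i hi)) (ne_of_gt hm0)] at this
      linarith
    calc ∑ i ∈ s, Real.log (q i) ≤ ∑ i ∈ s, (Real.log m + (q i / m - 1)) :=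
          Finset.sum_le_sum h1
      _ = s.card * Real.log m + (t / m - s.card) := by
          rw [Finset.sum_add_distrib, Finset.sum_sub_distrib, ← Finset.sum_div, ← ht]
          simp
      _ = s.card * Real.log m := by
          rw [hm]
          field_simp
          simp
  have expand : ∑ i ∈ s, c * Real.log (c / q i)
      = s.card * (c * Real.log c) - c * ∑ i ∈ s, Real.log (q i) := by
    have : ∀ i ∈ s, c * Real.log (c / q i) = c * Real.log c - c * Real.log (q i) := by
      intro i hi
      rw [Real.log_div (ne_of_gt hc) (ne_of_gt (hq i hi))]
      ring
    rw [Finset.sum_congr rfl this, Finset.sum_sub_distrib, Finset.sum_const,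
      ← Finset.mul_sum, nsmul_eq_mul]
  rw [expand]
  have hcm : Real.log ((s.card * c) / t) = Real.log c - Real.log m := by
    rw [hm, ← Real.log_div (ne_of_gt hc) (ne_of_gt hm0)]
    congr 1
    rw [hm, div_div_eq_mul_div, mul_comm]
  rw [hcm]
  have := mul_le_mul_of_nonneg_left key hc.le
  nlinarith [this]


lemma binPinsker (a b : ℝ) (ha0 : 0 < a) (ha1 : a ≤ 1) (hb0 : 0 < b) (hb1 : b < 1) :
    2*(a-b)^2 ≤ a * Real.log (a/b) + (1-a) * Real.log ((1-a)/(1-b)) := by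
  rcases eq_or_lt_of_le ha1 with h1 | h1
  · subst h1
    have := aux1 b hb0 hb1.le
    have hlog : Real.log (1/b) = -Real.log b := by
      rw [Real.log_div one_ne_zero (ne_of_gt hb0), Real.log_one]; ring
    simp [hlog]
    linarith
  · exact aux2 a b ha0 h1 hb0 hb1

theorem MSP_ge_of_KL_smooth_oneHot_le
    (C : ℕ) (hC : 1 ≤ C) (lam : ℝ) (hlam : 0 ≤ lam) (ε : ℝ) (hε : 0 ≤ ε)
    (y : Fin C) (q : Fin C → ℝ) (hq : IsPosProbVec q)
    (hKL : KLdiv (smooth lam (oneHot y)) q ≤ ε) :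
    MSP q ≥ 1 / (1 + lam) + lam / ((1 + lam) * (C : ℝ)) - Real.sqrt (ε / 2) := by
  obtain ⟨hqpos, hqsum⟩ := hq
  have h1l : (0:ℝ) < 1 + lam := by linarith
  have hmsp : q y ≤ MSP q := by
    have : Nonempty (Fin C) := ⟨y⟩
    exact le_ciSup (Set.Finite.bddAbove (Set.finite_range q)) y
  rcases Nat.lt_or_ge C 2 with hC1 | hC2
  · -- C = 1
    have hC1' : C = 1 := by omega
    subst hC1'
    have hy : q y = 1 := by
      rw [← hqsum, Fin.sum_univ_one]
      congr 1
      exact Subsingleton.elim _ _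
    have heq : 1 / (1 + lam) + lam / ((1 + lam) * ((1:ℕ) : ℝ)) = 1 := by
      push_cast
      field_simp
    rw [ge_iff_le, heq]
    have := Real.sqrt_nonneg (ε/2)
    linarith [hmsp, hy.symm.le]
  · -- C ≥ 2
    have hCpos : (0:ℝ) < C := by positivity
    have hCR : (2:ℝ) ≤ C := by exact_mod_cast hC2
    set a : ℝ := (1 + lam / C) / (1 + lam) with ha_def
    set c : ℝ := (lam / C) / (1 + lam) with hc_def
    set b : ℝ := q y with hb_def
    have ha0 : 0 < a := by
      apply div_pos _ h1l
      have : 0 ≤ lam / C := by positivity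
      linarith
    have hc0 : 0 ≤ c := by positivity
    have ha1 : a ≤ 1 := by
      rw [div_le_one h1l]
      have : lam / C ≤ lam := div_le_self hlam (by linarith)
      linarith
    have hb0 : 0 < b := hqpos y
    set s : Finset (Fin C) := Finset.univ.erase y with hs_def
    set t : ℝ := ∑ i ∈ s, q i with ht_def
    have hbt : t + b = 1 := by
      rw [ht_def, hb_def, hs_def, Finset.sum_erase_add _ _ (Finset.mem_univ y)]
      exact hqsum
    have hscard : (s.card : ℝ) = (C : ℝ) - 1 := by
      rw [hs_def, Finset.card_erase_of_mem (Finset.mem_univ y), Finset.card_univ,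
        Fintype.card_fin]
      have : 1 ≤ C := hC
      push_cast [Nat.cast_sub this]
      ring
    have hsne : s.Nonempty := by
      rw [← Finset.card_pos, hs_def, Finset.card_erase_of_mem (Finset.mem_univ y),
        Finset.card_univ, Fintype.card_fin]
      omega
    have ht0 : 0 < t := Finset.sum_pos (fun i _ => hqpos i) hsne
    have hb1 : b < 1 := by linarith
    have hac : (s.card : ℝ) * c = 1 - a := by
      rw [hscard, ha_def, hc_def]
      field_simp
      ring
    have hKLexp : KLdiv (smooth lam (oneHot y)) q
        = a * Real.log (a / b) + ∑ i ∈ s, c * Real.log (c / q i) := by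
      rw [KLdiv, ← Finset.sum_erase_add _ _ (Finset.mem_univ y), ← hs_def, add_comm]
      congr 1
      · congr 1 <;>
        · simp [smooth, oneHot, ha_def, hb_def]
      · apply Finset.sum_congr rfl
        intro i hi
        have hiy : i ≠ y := Finset.ne_of_mem_erase hi
        simp [smooth, oneHot, hiy, hc_def]
    have hjensen : (1 - a) * Real.log ((1 - a) / (1 - b)) ≤
        ∑ i ∈ s, c * Real.log (c / q i) := by
      rcases eq_or_lt_of_le hlam with h0 | h0
      · -- lam = 0
        have hc : c = 0 := by rw [hc_def, ← h0]; simp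
        have ha : (1:ℝ) - a = 0 := by
          rw [ha_def, ← h0]; simp
        rw [ha, hc]
        simp
      · -- lam > 0
        have hc : 0 < c := by
          rw [hc_def]
          positivity
        have := jensen_step s hsne q (fun i _ => hqpos i) c hc
        rw [← ht_def, hac] at this
        have h1b : (1:ℝ) - b = t := by linarith
        rw [h1b]
        exact this
    have hpinsker := binPinsker a b ha0 ha1 hb0 hb1
    have hchain : 2*(a-b)^2 ≤ ε := by
      calc 2*(a-b)^2 ≤ a * Real.log (a/b) + (1-a) * Real.log ((1-a)/(1-b)) := hpinsker
        _ ≤ a * Real.log (a/b) + ∑ i ∈ s, c * Real.log (c / q i) := by linarith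
        _ = KLdiv (smooth lam (oneHot y)) q := hKLexp.symm
        _ ≤ ε := hKL
    have hsq : (a - b)^2 ≤ ε / 2 := by linarith
    have habs : a - b ≤ Real.sqrt (ε / 2) := by
      calc a - b ≤ |a - b| := le_abs_self _
        _ = Real.sqrt ((a-b)^2) := (Real.sqrt_sq_eq_abs _).symm
        _ ≤ Real.sqrt (ε / 2) := Real.sqrt_le_sqrt hsq
    have haval : a = 1 / (1 + lam) + lam / ((1 + lam) * (C : ℝ)) := by
      rw [ha_def]
      field_simp
    rw [ge_iff_le]
    calc 1 / (1 + lam) + lam / ((1 + lam) * (C : ℝ)) - Real.sqrt (ε / 2)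
        = a - Real.sqrt (ε / 2) := by rw [haval]
      _ ≤ b := by linarith
      _ ≤ MSP q := hmsp
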